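/- Let n ≥ 5 be an integer and q = (n+4)/(n-4). There do not exist continuous functions u, w : [0,∞) → ℝ with w(r) ≥ 0 for all r ≥ 0 and u(0) < 0 such that for every r ≥ 0 both u(r) ≤ u(0) − ∫₀^r s^{1−n} (∫₀^s t^{n−1} w(t)^q dt) ds and w(r) ≥ w(0) − ∫₀^r s^{1−n} (∫₀^s t^{n−1} u(t) dt) ds hold. -/

import Mathlib

open MeasureTheory Metric Filter Set
open scoped ENNReal NNReal

section NoRadAux
open intervalIntegral
namespace NoRad

variable {ν : ℝ}

lemma cont_pow {p : ℝ} (hp : 0 ≤ p) : Continuous fun t : ℝ => t ^ p :=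
  Real.continuous_rpow_const hp

/-- inner integrand integrable -/
lemma innerInt (hν : 5 ≤ ν) {f : ℝ → ℝ} (hf : ContinuousOn f (Ici 0)) {s : ℝ} (hs : 0 ≤ s) :
    IntervalIntegrable (fun t => t ^ (ν - 1) * f t) volume 0 s := by
  apply ContinuousOn.intervalIntegrable
  rw [uIcc_of_le hs]
  exact ((cont_pow (by linarith)).continuousOn).mul (hf.mono (Icc_subset_Ici_self))

/-- inner primitive continuous on [0,r] -/
lemma innerCont (hν : 5 ≤ ν) {f : ℝ → ℝ} (hf : ContinuousOn f (Ici 0)) {r : ℝ} (hr : 0 ≤ r) :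
    ContinuousOn (fun s => ∫ t in (0:ℝ)..s, t ^ (ν - 1) * f t) (Icc 0 r) := by
  have h : IntegrableOn (fun t => t ^ (ν - 1) * f t) (Icc 0 r) volume := by
    have := (innerInt hν hf hr)
    rw [intervalIntegrable_iff_integrableOn_Icc_of_le hr] at this
    exact this
  have := intervalIntegral.continuousOn_primitive (f := fun t => t ^ (ν - 1) * f t)
    (a := 0) (b := r) (μ := volume) h
  apply this.congr
  intro x hx
  simp [intervalIntegral.integral_of_le hx.1]

/-- bound on the inner integral -/
lemma innerBound (hν : 5 ≤ ν) {f : ℝ → ℝ} (hf : ContinuousOn f (Ici 0)) {r : ℝ} (hr : 0 ≤ r)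
    {M : ℝ} (hM : ∀ t ∈ Icc (0:ℝ) r, |f t| ≤ M) {s : ℝ} (hs : s ∈ Icc (0:ℝ) r) :
    |∫ t in (0:ℝ)..s, t ^ (ν - 1) * f t| ≤ M * s ^ ν / ν := by
  have hs0 : (0:ℝ) ≤ s := hs.1
  have h1 : |∫ t in (0:ℝ)..s, t ^ (ν - 1) * f t| ≤ ∫ t in (0:ℝ)..s, |t ^ (ν - 1) * f t| :=
    intervalIntegral.abs_integral_le_integral_abs hs0
  have h2 : (∫ t in (0:ℝ)..s, |t ^ (ν - 1) * f t|) ≤ ∫ t in (0:ℝ)..s, M * t ^ (ν - 1) := by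
    apply intervalIntegral.integral_mono_on hs0
    · exact (innerInt hν hf hs0).abs
    · exact (ContinuousOn.intervalIntegrable ((cont_pow (p := ν - 1) (by linarith)).continuousOn)).const_mul M
    · intro t ht
      have ht0 : (0:ℝ) ≤ t := ht.1
      rw [abs_mul, abs_of_nonneg (Real.rpow_nonneg ht0 _)]
      have := hM t ⟨ht.1, le_trans ht.2 hs.2⟩
      calc t ^ (ν - 1) * |f t| ≤ t ^ (ν - 1) * M :=
            mul_le_mul_of_nonneg_left this (Real.rpow_nonneg ht0 _)
        _ = M * t ^ (ν - 1) := mul_comm _ _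
  have h3 : (∫ t in (0:ℝ)..s, M * t ^ (ν - 1)) = M * s ^ ν / ν := by
    rw [intervalIntegral.integral_const_mul, integral_rpow (Or.inl (by linarith)),
      Real.zero_rpow (by linarith), show ν - 1 + 1 = ν by ring]
    ring
  calc |∫ t in (0:ℝ)..s, t ^ (ν - 1) * f t| ≤ _ := h1
    _ ≤ _ := h2
    _ = _ := h3

noncomputable def J (ν : ℝ) (f : ℝ → ℝ) (r : ℝ) : ℝ :=
  ∫ s in (0:ℝ)..r, s ^ (1 - ν) * ∫ t in (0:ℝ)..s, t ^ (ν - 1) * f t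

/-- outer integrand integrable -/
lemma outerInt (hν : 5 ≤ ν) {f : ℝ → ℝ} (hf : ContinuousOn f (Ici 0)) {r : ℝ} (hr : 0 ≤ r) :
    IntervalIntegrable (fun s => s ^ (1 - ν) * ∫ t in (0:ℝ)..s, t ^ (ν - 1) * f t)
      volume 0 r := by
  -- bound |f| on [0,r]
  obtain ⟨M, hM⟩ : ∃ M, ∀ t ∈ Icc (0:ℝ) r, |f t| ≤ M := by
    obtain ⟨M, hM⟩ := (isCompact_Icc (a := (0:ℝ)) (b := r)).exists_bound_of_continuousOn
      (hf.mono Icc_subset_Ici_self)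
    exact ⟨M, fun t ht => by simpa using hM t ht⟩
  have hM0 : 0 ≤ M := le_trans (abs_nonneg _) (hM 0 ⟨le_rfl, hr⟩)
  -- dominating function
  have hdom : IntervalIntegrable (fun s : ℝ => M / ν * s) volume 0 r :=
    (ContinuousOn.intervalIntegrable (continuous_id.continuousOn)).const_mul _
  apply hdom.mono_fun
  · rw [uIoc_of_le hr]
    apply ContinuousOn.aestronglyMeasurable _ measurableSet_Ioc
    apply ContinuousOn.mul
    · intro x hx
      exact (Real.continuousAt_rpow_const x (1 - ν) (Or.inl (ne_of_gt hx.1))).continuousWithinAt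
    · exact (innerCont hν hf hr).mono Ioc_subset_Icc_self
  · rw [uIoc_of_le hr]
    filter_upwards [ae_restrict_mem measurableSet_Ioc] with s hs
    have hs0 : 0 < s := hs.1
    have hsI : s ∈ Icc (0:ℝ) r := ⟨hs0.le, hs.2⟩
    rw [Real.norm_eq_abs, Real.norm_eq_abs, abs_mul,
      abs_of_nonneg (Real.rpow_nonneg hs0.le _)]
    have hb := innerBound hν hf hr hM hsI
    calc s ^ (1 - ν) * |∫ t in (0:ℝ)..s, t ^ (ν - 1) * f t|
        ≤ s ^ (1 - ν) * (M * s ^ ν / ν) :=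
          mul_le_mul_of_nonneg_left hb (Real.rpow_nonneg hs0.le _)
      _ = M / ν * (s ^ (1 - ν) * s ^ ν) := by ring
      _ = M / ν * s := by rw [← Real.rpow_add hs0, show 1 - ν + ν = 1 by ring, Real.rpow_one]
      _ ≤ |M / ν * s| := le_abs_self _

/-- monotonicity of J -/
lemma J_mono (hν : 5 ≤ ν) {f g : ℝ → ℝ} (hf : ContinuousOn f (Ici 0))
    (hg : ContinuousOn g (Ici 0)) (hfg : ∀ t, 0 ≤ t → f t ≤ g t) {r : ℝ} (hr : 0 ≤ r) :
    J ν f r ≤ J ν g r := by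
  apply intervalIntegral.integral_mono_on hr (outerInt hν hf hr) (outerInt hν hg hr)
  intro s hs
  have hs0 : (0:ℝ) ≤ s := hs.1
  apply mul_le_mul_of_nonneg_left _ (Real.rpow_nonneg hs0 _)
  apply intervalIntegral.integral_mono_on hs0 (innerInt hν hf hs0) (innerInt hν hg hs0)
  intro t ht
  exact mul_le_mul_of_nonneg_left (hfg t ht.1) (Real.rpow_nonneg ht.1 _)

/-- J of a power function -/
lemma J_pow (hν : 5 ≤ ν) {b : ℝ} (hb : 0 ≤ b) (K : ℝ) {r : ℝ} (hr : 0 ≤ r) :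
    J ν (fun t => K * t ^ b) r = K / ((ν + b) * (b + 2)) * r ^ (b + 2) := by
  have hνb : (0:ℝ) < ν + b := by linarith
  have hinner : ∀ s : ℝ, 0 ≤ s →
      (∫ t in (0:ℝ)..s, t ^ (ν - 1) * (K * t ^ b)) = K / (ν + b) * s ^ (ν + b) := by
    intro s hs
    have : EqOn (fun t : ℝ => t ^ (ν - 1) * (K * t ^ b)) (fun t : ℝ => K * t ^ (ν - 1 + b))
        (uIcc 0 s) := by
      intro t ht
      rw [uIcc_of_le hs] at ht
      rcases eq_or_lt_of_le ht.1 with h0 | h0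
      · simp only [← h0, Real.zero_rpow (by linarith : ν - 1 ≠ 0),
          Real.zero_rpow (by linarith : ν - 1 + b ≠ 0), zero_mul, mul_zero]
      · simp only [Real.rpow_add h0]; ring
    rw [intervalIntegral.integral_congr this, intervalIntegral.integral_const_mul,
      integral_rpow (Or.inl (by linarith)), Real.zero_rpow (by linarith : ν - 1 + b + 1 ≠ 0),
      show ν - 1 + b + 1 = ν + b by ring]
    ring
  have houter : EqOn (fun s : ℝ => s ^ (1 - ν) * ∫ t in (0:ℝ)..s, t ^ (ν - 1) * (K * t ^ b))
      (fun s : ℝ => K / (ν + b) * s ^ (b + 1)) (uIcc 0 r) := by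
    intro s hsr
    rw [uIcc_of_le hr] at hsr
    simp only
    rw [hinner s hsr.1]
    rcases eq_or_lt_of_le hsr.1 with h0 | h0
    · simp only [← h0, Real.zero_rpow (by linarith : (1:ℝ) - ν ≠ 0),
        Real.zero_rpow (by linarith : b + 1 ≠ 0), zero_mul, mul_zero]
    · rw [show s ^ (1-ν) * (K / (ν + b) * s ^ (ν + b)) = K / (ν+b) * (s ^ (1-ν) * s ^ (ν+b))
        by ring, ← Real.rpow_add h0, show 1 - ν + (ν + b) = b + 1 by ring]
  rw [J, intervalIntegral.integral_congr houter, intervalIntegral.integral_const_mul,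
    integral_rpow (Or.inl (by linarith)), Real.zero_rpow (by linarith : b + 1 + 1 ≠ 0),
    show b + 1 + 1 = b + 2 by ring]
  field_simp
  ring

noncomputable def Df (ν qe b : ℝ) : ℝ :=
  ((ν + qe * b) * (qe * b + 2)) * ((ν + (qe * b + 2)) * ((qe * b + 2) + 2))

lemma Df_pos (hν : 5 ≤ ν) {qe b : ℝ} (hq1 : 1 < qe) (hb : 2 ≤ b) : 0 < Df ν qe b := by
  have h1 : 0 < qe * b := by nlinarith
  have := hν
  unfold Df; positivity

lemma J_nonneg (hν : 5 ≤ ν) {f : ℝ → ℝ} (hf : ∀ t, 0 ≤ t → 0 ≤ f t) {r : ℝ} (hr : 0 ≤ r) :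
    0 ≤ J ν f r := by
  apply intervalIntegral.integral_nonneg hr
  intro s hs
  apply mul_nonneg (Real.rpow_nonneg hs.1 _)
  apply intervalIntegral.integral_nonneg hs.1
  intro t ht
  exact mul_nonneg (Real.rpow_nonneg ht.1 _) (hf t ht.1)

section Main

variable {ν qe : ℝ} {u w : ℝ → ℝ}

lemma stepW (hν : 5 ≤ ν) (hq1 : 1 < qe)
    (hu : ContinuousOn u (Ici 0)) (hw : ContinuousOn w (Ici 0))
    (hwpos : ∀ r, 0 ≤ r → 0 ≤ w r) (hu0 : u 0 < 0)
    (hui : ∀ r, 0 ≤ r → u r ≤ u 0 - J ν (fun t => w t ^ qe) r)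
    (hwi : ∀ r, 0 ≤ r → w 0 - J ν u r ≤ w r)
    {C b : ℝ} (hC : 0 < C) (hb : 2 ≤ b)
    (h : ∀ t, 0 ≤ t → C * t ^ b ≤ w t) :
    ∀ r, 0 ≤ r → C ^ qe / Df ν qe b * r ^ (qe * b + 4) ≤ w r := by
  have hq0 : (0:ℝ) ≤ qe := by linarith
  have hqb : (0:ℝ) < qe * b := by nlinarith
  have hwq : ContinuousOn (fun t => w t ^ qe) (Ici 0) :=
    hw.rpow_const (fun x _ => Or.inr hq0)
  -- pointwise power bound
  have hpw : ∀ t, 0 ≤ t → C ^ qe * t ^ (qe * b) ≤ w t ^ qe := by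
    intro t ht
    have h1 : (C * t ^ b) ^ qe ≤ w t ^ qe :=
      Real.rpow_le_rpow (by positivity) (h t ht) hq0
    calc C ^ qe * t ^ (qe * b) = (C * t ^ b) ^ qe := by
          rw [Real.mul_rpow hC.le (Real.rpow_nonneg ht _), mul_comm qe b,
            Real.rpow_mul ht]
      _ ≤ w t ^ qe := h1
  -- first integration
  set C1 : ℝ := C ^ qe / ((ν + qe * b) * (qe * b + 2)) with hC1
  have hC1pos : 0 < C1 := by
    apply div_pos (Real.rpow_pos_of_pos hC _); nlinarith
  have hJ1 : ∀ r, 0 ≤ r → C1 * r ^ (qe * b + 2) ≤ J ν (fun t => w t ^ qe) r := by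
    intro r hr
    have hmono := J_mono hν (f := fun t => C ^ qe * t ^ (qe * b)) (g := fun t => w t ^ qe)
      ((continuous_const.mul (cont_pow hqb.le)).continuousOn) hwq hpw hr
    rwa [J_pow hν hqb.le _ hr] at hmono
  -- u bound
  have huneg : ∀ t, 0 ≤ t → u t ≤ -C1 * t ^ (qe * b + 2) := by
    intro t ht
    have := hui t ht
    have h2 := hJ1 t ht
    nlinarith [this, h2]
  -- second integration
  have hb2 : (0:ℝ) ≤ qe * b + 2 := by linarith
  have hJ2 : ∀ r, 0 ≤ r →
      J ν u r ≤ -C1 / ((ν + (qe * b + 2)) * ((qe * b + 2) + 2)) * r ^ ((qe * b + 2) + 2) := by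
    intro r hr
    have hmono := J_mono hν (f := u) (g := fun t => -C1 * t ^ (qe * b + 2)) hu
      ((continuous_const.mul (cont_pow hb2)).continuousOn) huneg hr
    rwa [J_pow hν hb2 _ hr] at hmono
  intro r hr
  have h3 := hwi r hr
  have h4 := hJ2 r hr
  have h5 : 0 ≤ w 0 := hwpos 0 le_rfl
  have hD : C ^ qe / Df ν qe b * r ^ (qe * b + 4)
      = -(-C1 / ((ν + (qe * b + 2)) * ((qe * b + 2) + 2)) * r ^ ((qe * b + 2) + 2)) := by
    rw [hC1, Df, show (qe * b + 2) + 2 = qe * b + 4 by ring, neg_div, neg_mul, neg_neg,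
      div_div]
  rw [hD]
  linarith

end Main

section Main2

variable {ν qe : ℝ} {u w : ℝ → ℝ}

lemma baseW (hν : 5 ≤ ν)
    (hu : ContinuousOn u (Ici 0)) (hw : ContinuousOn w (Ici 0))
    (hwpos : ∀ r, 0 ≤ r → 0 ≤ w r) (hu0 : u 0 < 0)
    (hui : ∀ r, 0 ≤ r → u r ≤ u 0 - J ν (fun t => w t ^ qe) r)
    (hwi : ∀ r, 0 ≤ r → w 0 - J ν u r ≤ w r) :
    ∀ r, 0 ≤ r → -(u 0) / (ν * 2) * r ^ (2:ℝ) ≤ w r := by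
  have hwq : ∀ t, 0 ≤ t → (0:ℝ) ≤ w t ^ qe := fun t ht => Real.rpow_nonneg (hwpos t ht) _
  have huu : ∀ t, 0 ≤ t → u t ≤ u 0 := by
    intro t ht
    have := hui t ht
    have h2 : 0 ≤ J ν (fun t => w t ^ qe) t := J_nonneg hν hwq ht
    linarith
  have huc : ∀ t, 0 ≤ t → u t ≤ u 0 * t ^ (0:ℝ) := by
    intro t ht
    rw [Real.rpow_zero, mul_one]
    exact huu t ht
  intro r hr
  have hmono := J_mono hν (f := u) (g := fun t => u 0 * t ^ (0:ℝ)) hu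
    ((continuous_const.mul (cont_pow le_rfl)).continuousOn) huc hr
  rw [J_pow hν le_rfl _ hr] at hmono
  have h3 := hwi r hr
  have h5 : 0 ≤ w 0 := hwpos 0 le_rfl
  have he : u 0 / ((ν + 0) * (0 + 2)) * r ^ ((0:ℝ) + 2) = -(-(u 0) / (ν * 2) * r ^ (2:ℝ)) := by
    norm_num
    ring
  rw [he] at hmono
  linarith

end Main2

noncomputable def aSeq (qe : ℝ) : ℕ → ℝ
  | 0 => 2
  | k+1 => qe * aSeq qe k + 4

noncomputable def cSeq (ν qe c0 : ℝ) : ℕ → ℝ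
  | 0 => c0
  | k+1 => cSeq ν qe c0 k ^ qe / Df ν qe (aSeq qe k)

lemma aSeq_lb {qe : ℝ} (hq1 : 1 < qe) : ∀ k, 2 * qe ^ k ≤ aSeq qe k := by
  intro k
  induction k with
  | zero => simp [aSeq]
  | succ k ih =>
    have hq0 : (0:ℝ) < qe := by linarith
    calc 2 * qe ^ (k+1) = qe * (2 * qe ^ k) := by ring
      _ ≤ qe * aSeq qe k := by nlinarith
      _ ≤ aSeq qe (k+1) := by rw [aSeq]; linarith

lemma aSeq_ub {qe : ℝ} (hq1 : 1 < qe) :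
    ∀ k, aSeq qe k ≤ (2 + 4 / (qe - 1)) * qe ^ k - 4 / (qe - 1) := by
  intro k
  have hq0 : (0:ℝ) < qe - 1 := by linarith
  induction k with
  | zero => simp [aSeq]
  | succ k ih =>
    rw [aSeq]
    have hpow : (1:ℝ) ≤ qe ^ k := one_le_pow₀ hq1.le
    calc qe * aSeq qe k + 4 ≤ qe * ((2 + 4 / (qe - 1)) * qe ^ k - 4 / (qe - 1)) + 4 := by
          nlinarith
      _ = (2 + 4 / (qe - 1)) * qe ^ (k+1) - 4 / (qe - 1) := by
          field_simp
          ring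

lemma aSeq_ge2 {qe : ℝ} (hq1 : 1 < qe) (k : ℕ) : 2 ≤ aSeq qe k := by
  have h1 : (1:ℝ) ≤ qe ^ k := one_le_pow₀ hq1.le
  have := aSeq_lb hq1 k
  linarith

lemma cSeq_pos {ν qe c0 : ℝ} (hν : 5 ≤ ν) (hq1 : 1 < qe) (hc0 : 0 < c0) :
    ∀ k, 0 < cSeq ν qe c0 k := by
  intro k
  induction k with
  | zero => exact hc0
  | succ k ih =>
    exact div_pos (Real.rpow_pos_of_pos ih qe) (Df_pos hν hq1 (aSeq_ge2 hq1 k))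

noncomputable def Bc (ν qe : ℝ) : ℝ := ν + 4 + qe * (2 + 4 / (qe - 1))
noncomputable def Hc (ν qe : ℝ) : ℝ := Bc ν qe ^ (4:ℕ) * qe ^ ((8:ℝ) / (qe - 1))
noncomputable def sc (qe : ℝ) : ℝ := 1 + (qe - 1) / 2

lemma Bc_ge_one {ν qe : ℝ} (hν : 5 ≤ ν) (hq1 : 1 < qe) : 1 ≤ Bc ν qe := by
  have h1 : 0 < qe - 1 := by linarith
  have h2 : 0 ≤ 4 / (qe - 1) := by positivity
  have : 0 ≤ qe * (2 + 4 / (qe - 1)) := by nlinarith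
  unfold Bc; linarith

lemma Hc_ge_one {ν qe : ℝ} (hν : 5 ≤ ν) (hq1 : 1 < qe) : 1 ≤ Hc ν qe := by
  have h1 : (1:ℝ) ≤ Bc ν qe ^ (4:ℕ) := one_le_pow₀ (Bc_ge_one hν hq1)
  have hqm : (0:ℝ) < qe - 1 := by linarith
  have h2 : (1:ℝ) ≤ qe ^ ((8:ℝ) / (qe - 1)) :=
    Real.one_le_rpow hq1.le (by positivity)
  unfold Hc; nlinarith

lemma sc_bernoulli {qe : ℝ} (hq1 : 1 < qe) (k : ℕ) :
    1 + (k : ℝ) * ((qe - 1) / 2) ≤ sc qe ^ k := by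
  unfold sc
  exact one_add_mul_le_pow (by linarith) k

lemma sc_pow_ge_one {qe : ℝ} (hq1 : 1 < qe) (k : ℕ) : 1 ≤ sc qe ^ k :=
  one_le_pow₀ (by unfold sc; linarith)

lemma Df_le {ν qe : ℝ} (hν : 5 ≤ ν) (hq1 : 1 < qe) (k : ℕ) :
    Df ν qe (aSeq qe k) ≤ Hc ν qe ^ (sc qe ^ k) := by
  set b := aSeq qe k with hbdef
  set A : ℝ := 2 + 4 / (qe - 1) with hA
  set B : ℝ := Bc ν qe with hB
  set E : ℝ := qe ^ k with hE
  have hq0 : (0:ℝ) < qe := by linarith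
  have hqm1 : (0:ℝ) < qe - 1 := by linarith
  have hE1 : (1:ℝ) ≤ E := one_le_pow₀ hq1.le
  have hb2 : (2:ℝ) ≤ b := aSeq_ge2 hq1 k
  have hbub : b ≤ A * E := by
    have := aSeq_ub hq1 k
    have h4 : 0 ≤ 4 / (qe - 1) := by positivity
    rw [hbdef, hA, hE]; linarith
  have hA0 : 0 < A := by rw [hA]; positivity
  have hBb : ν + qe * A ≤ B ∧ qe * A + 2 ≤ B ∧ ν + qe * A + 2 ≤ B ∧ qe * A + 4 ≤ B := by
    rw [hB]; unfold Bc; refine ⟨by nlinarith, by nlinarith, by nlinarith, by nlinarith⟩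
  have hBE : (0:ℝ) < B * E := by
    have := Bc_ge_one hν hq1; rw [hB] at *; nlinarith
  have f1 : ν + qe * b ≤ B * E := by nlinarith [hBb.1]
  have f2 : qe * b + 2 ≤ B * E := by nlinarith [hBb.2.1]
  have f3 : ν + (qe * b + 2) ≤ B * E := by nlinarith [hBb.2.2.1]
  have f4 : (qe * b + 2) + 2 ≤ B * E := by nlinarith [hBb.2.2.2]
  have p1 : (0:ℝ) ≤ ν + qe * b := by nlinarith
  have p2 : (0:ℝ) ≤ qe * b + 2 := by nlinarith
  have p3 : (0:ℝ) ≤ ν + (qe * b + 2) := by nlinarith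
  have p4 : (0:ℝ) ≤ (qe * b + 2) + 2 := by nlinarith
  have hDf4 : Df ν qe b ≤ (B * E) ^ (4:ℕ) := by
    have g1 : (ν + qe * b) * (qe * b + 2) ≤ (B * E) * (B * E) :=
      mul_le_mul f1 f2 p2 hBE.le
    have g2 : (ν + (qe * b + 2)) * ((qe * b + 2) + 2) ≤ (B * E) * (B * E) :=
      mul_le_mul f3 f4 p4 hBE.le
    have := mul_le_mul g1 g2 (mul_nonneg p3 p4) (by positivity)
    calc Df ν qe b ≤ (B * E) * (B * E) * ((B * E) * (B * E)) := this
      _ = (B * E) ^ (4:ℕ) := by ring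
  have hk4 : ((4 * k : ℕ) : ℝ) ≤ 8 / (qe - 1) * sc qe ^ k := by
    have hbern := sc_bernoulli hq1 k
    have : (k : ℝ) * (qe - 1) / 2 ≤ sc qe ^ k := by linarith
    rw [div_mul_eq_mul_div, le_div_iff₀ hqm1]
    push_cast
    nlinarith
  have hH : (B * E) ^ (4:ℕ) ≤ Hc ν qe ^ (sc qe ^ k) := by
    have hB1 : (1:ℝ) ≤ B := Bc_ge_one hν hq1
    have expand : (B * E) ^ (4:ℕ) = B ^ (4:ℕ) * qe ^ (4 * k : ℕ) := by
      rw [hE, mul_pow, ← pow_mul, Nat.mul_comm]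
    have t1 : B ^ (4:ℕ) ≤ (B ^ (4:ℕ)) ^ (sc qe ^ k) := by
      nth_rewrite 1 [← Real.rpow_one (B ^ (4:ℕ))]
      exact Real.rpow_le_rpow_of_exponent_le (one_le_pow₀ hB1) (sc_pow_ge_one hq1 k)
    have t2 : qe ^ (4 * k : ℕ) ≤ (qe ^ ((8:ℝ) / (qe - 1))) ^ (sc qe ^ k) := by
      rw [← Real.rpow_natCast qe (4 * k), ← Real.rpow_mul hq0.le]
      exact Real.rpow_le_rpow_of_exponent_le hq1.le hk4
    have hnn : (0:ℝ) ≤ qe ^ (4 * k : ℕ) := by positivity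
    calc (B * E) ^ (4:ℕ) = B ^ (4:ℕ) * qe ^ (4 * k : ℕ) := expand
      _ ≤ (B ^ (4:ℕ)) ^ (sc qe ^ k) * (qe ^ ((8:ℝ) / (qe - 1))) ^ (sc qe ^ k) := by
          apply mul_le_mul t1 t2 hnn (by positivity)
      _ = Hc ν qe ^ (sc qe ^ k) := by
          rw [Hc, Real.mul_rpow (by positivity) (by positivity)]
  exact le_trans hDf4 hH

noncomputable def Fc (qe : ℝ) : ℝ := 2 / (qe - 1)

lemma cSeq_lb {ν qe c0 : ℝ} (hν : 5 ≤ ν) (hq1 : 1 < qe) (hc0 : 0 < c0) (k : ℕ) :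
    (c0 * Hc ν qe ^ (-(Fc qe))) ^ (qe ^ k) * Hc ν qe ^ (Fc qe * sc qe ^ k)
      ≤ cSeq ν qe c0 k := by
  have hH1 : (1:ℝ) ≤ Hc ν qe := Hc_ge_one hν hq1
  have hH0 : (0:ℝ) < Hc ν qe := by linarith
  have hγ0 : (0:ℝ) < c0 * Hc ν qe ^ (-(Fc qe)) := by positivity
  set γ : ℝ := c0 * Hc ν qe ^ (-(Fc qe)) with hγ
  induction k with
  | zero =>
    simp only [pow_zero, Real.rpow_one, mul_one, cSeq, hγ]
    rw [mul_assoc, ← Real.rpow_add hH0]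
    simp
  | succ k ih =>
    have hq0 : (0:ℝ) ≤ qe := by linarith
    have hx0 : (0:ℝ) ≤ γ ^ (qe ^ k) * Hc ν qe ^ (Fc qe * sc qe ^ k) := by positivity
    have h1 : (γ ^ (qe ^ k) * Hc ν qe ^ (Fc qe * sc qe ^ k)) ^ qe
        ≤ cSeq ν qe c0 k ^ qe := Real.rpow_le_rpow hx0 ih hq0
    have hDle := Df_le hν hq1 k
    have hDpos := Df_pos hν hq1 (aSeq_ge2 hq1 k)
    have h2 : (γ ^ (qe ^ k) * Hc ν qe ^ (Fc qe * sc qe ^ k)) ^ qe / Hc ν qe ^ (sc qe ^ k)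
        ≤ cSeq ν qe c0 k ^ qe / Df ν qe (aSeq qe k) :=
      div_le_div₀ (Real.rpow_nonneg (cSeq_pos hν hq1 hc0 k).le qe) h1 hDpos hDle
    have h3 : (γ ^ (qe ^ k) * Hc ν qe ^ (Fc qe * sc qe ^ k)) ^ qe / Hc ν qe ^ (sc qe ^ k)
        = γ ^ (qe ^ (k+1)) * Hc ν qe ^ (Fc qe * sc qe ^ (k+1)) := by
      rw [Real.mul_rpow (by positivity) (by positivity), ← Real.rpow_mul hγ0.le,
        ← Real.rpow_mul hH0.le, mul_div_assoc, ← Real.rpow_sub hH0, pow_succ, pow_succ,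
        show Fc qe * sc qe ^ k * qe - sc qe ^ k = Fc qe * (sc qe ^ k * sc qe) by
          have hne : qe - 1 ≠ 0 := by linarith
          unfold Fc sc
          generalize sc qe ^ k = X
          field_simp
          ring]
    calc γ ^ qe ^ (k+1) * Hc ν qe ^ (Fc qe * sc qe ^ (k+1))
        = (γ ^ (qe ^ k) * Hc ν qe ^ (Fc qe * sc qe ^ k)) ^ qe / Hc ν qe ^ (sc qe ^ k) :=
          h3.symm
      _ ≤ cSeq ν qe c0 k ^ qe / Df ν qe (aSeq qe k) := h2
      _ = cSeq ν qe c0 (k+1) := rfl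

section Final

variable {ν qe : ℝ} {u w : ℝ → ℝ}

lemma iterW (hν : 5 ≤ ν) (hq1 : 1 < qe)
    (hu : ContinuousOn u (Ici 0)) (hw : ContinuousOn w (Ici 0))
    (hwpos : ∀ r, 0 ≤ r → 0 ≤ w r) (hu0 : u 0 < 0)
    (hui : ∀ r, 0 ≤ r → u r ≤ u 0 - J ν (fun t => w t ^ qe) r)
    (hwi : ∀ r, 0 ≤ r → w 0 - J ν u r ≤ w r) :
    ∀ k, ∀ t, 0 ≤ t → cSeq ν qe (-(u 0) / (ν * 2)) k * t ^ aSeq qe k ≤ w t := by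
  have hc0 : (0:ℝ) < -(u 0) / (ν * 2) := by
    apply div_pos (by linarith) (by linarith)
  intro k
  induction k with
  | zero =>
    intro t ht
    have := baseW (qe := qe) hν hu hw hwpos hu0 hui hwi t ht
    simpa [cSeq, aSeq] using this
  | succ k ih =>
    have := stepW hν hq1 hu hw hwpos hu0 hui hwi
      (cSeq_pos hν hq1 hc0 k) (aSeq_ge2 hq1 k) ih
    intro t ht
    exact this t ht

end Final

theorem main (n : ℕ) (hn : 5 ≤ n) (q : ℝ) (hq : q = ((n : ℝ) + 4) / ((n : ℝ) - 4)) :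
    ¬ ∃ u w : ℝ → ℝ,
      ContinuousOn u (Set.Ici 0) ∧ ContinuousOn w (Set.Ici 0) ∧
      (∀ r : ℝ, 0 ≤ r → 0 ≤ w r) ∧ u 0 < 0 ∧
      (∀ r : ℝ, 0 ≤ r →
        u r ≤ u 0 - ∫ s in (0:ℝ)..r, s ^ (1 - (n : ℝ)) *
          ∫ t in (0:ℝ)..s, t ^ ((n : ℝ) - 1) * w t ^ q) ∧
      (∀ r : ℝ, 0 ≤ r →
        w r ≥ w 0 - ∫ s in (0:ℝ)..r, s ^ (1 - (n : ℝ)) *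
          ∫ t in (0:ℝ)..s, t ^ ((n : ℝ) - 1) * u t) := by
  rintro ⟨u, w, hu, hw, hwpos, hu0, hui', hwi'⟩
  set ν : ℝ := (n : ℝ) with hν'
  have hν : 5 ≤ ν := by rw [hν']; exact_mod_cast hn
  have hν4 : (0:ℝ) < ν - 4 := by linarith
  have hq1 : 1 < q := by rw [hq]; rw [lt_div_iff₀ hν4]; linarith
  have hui : ∀ r, 0 ≤ r → u r ≤ u 0 - J ν (fun t => w t ^ q) r := fun r hr => hui' r hr
  have hwi : ∀ r, 0 ≤ r → w 0 - J ν u r ≤ w r := fun r hr => hwi' r hr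
  set c0 : ℝ := -(u 0) / (ν * 2) with hc0'
  have hc0 : 0 < c0 := div_pos (by linarith) (by linarith)
  have hiter := iterW hν hq1 hu hw hwpos hu0 hui hwi
  have hclb := fun k => cSeq_lb (ν := ν) (qe := q) (c0 := c0) hν hq1 hc0 k
  have hH1 : (1:ℝ) ≤ Hc ν q := Hc_ge_one hν hq1
  set γ : ℝ := c0 * Hc ν q ^ (-(Fc q)) with hγ'
  have hγ0 : 0 < γ := by positivity
  set R : ℝ := max 1 (2 / γ) with hR'
  have hR1 : (1:ℝ) ≤ R := le_max_left _ _
  have hR0 : (0:ℝ) ≤ R := by linarith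
  have hγR : 2 ≤ γ * R ^ (2:ℝ) := by
    have h1 : 2 / γ ≤ R := le_max_right _ _
    have h2 : 2 ≤ γ * R := by rw [mul_comm, ← div_le_iff₀ hγ0]; exact h1
    have h3 : R ≤ R ^ (2:ℝ) := by
      nth_rewrite 1 [← Real.rpow_one R]
      exact Real.rpow_le_rpow_of_exponent_le hR1 one_le_two
    nlinarith
  -- key lower bound at R for every k
  have hkey : ∀ k : ℕ, Real.log 2 * ((k : ℝ) * (q - 1)) ≤ w R := by
    intro k
    have e1 : γ ^ (q ^ k) ≤ cSeq ν q c0 k := by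
      have h2 : (1:ℝ) ≤ Hc ν q ^ (Fc q * sc q ^ k) := by
        apply Real.one_le_rpow hH1
        have : (0:ℝ) < q - 1 := by linarith
        have h3 : (0:ℝ) ≤ Fc q := by unfold Fc; positivity
        have h4 : (0:ℝ) ≤ sc q ^ k := pow_nonneg (by unfold sc; linarith) k
        exact mul_nonneg h3 h4
      have h5 : (0:ℝ) < γ ^ (q ^ k) := Real.rpow_pos_of_pos hγ0 _
      calc γ ^ (q ^ k) = γ ^ (q ^ k) * 1 := (mul_one _).symm
        _ ≤ γ ^ (q ^ k) * Hc ν q ^ (Fc q * sc q ^ k) := by nlinarith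
        _ ≤ cSeq ν q c0 k := hclb k
    have e2 : R ^ (2 * q ^ k) ≤ R ^ aSeq q k :=
      Real.rpow_le_rpow_of_exponent_le hR1 (aSeq_lb hq1 k)
    have e3 : γ ^ (q ^ k) * R ^ (2 * q ^ k) ≤ cSeq ν q c0 k * R ^ aSeq q k := by
      apply mul_le_mul e1 e2 (Real.rpow_nonneg hR0 _)
        (cSeq_pos hν hq1 hc0 k).le
    have e4 : (γ * R ^ (2:ℝ)) ^ (q ^ k) = γ ^ (q ^ k) * R ^ (2 * q ^ k) := by
      rw [Real.mul_rpow hγ0.le (Real.rpow_nonneg hR0 _), ← Real.rpow_mul hR0,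
        mul_comm (2:ℝ) (q ^ k), Real.rpow_mul hR0]
    have e5 : (2:ℝ) ^ (q ^ k) ≤ (γ * R ^ (2:ℝ)) ^ (q ^ k) :=
      Real.rpow_le_rpow (by norm_num) hγR (by positivity)
    have e6 : Real.log 2 * q ^ k ≤ (2:ℝ) ^ (q ^ k) := by
      rw [Real.rpow_def_of_pos (by norm_num : (0:ℝ) < 2)]
      have := Real.add_one_le_exp (Real.log 2 * q ^ k)
      have hl2 : (0:ℝ) < Real.log 2 := Real.log_pos (by norm_num)
      linarith
    have e7 : (1:ℝ) + (k:ℝ) * (q - 1) ≤ q ^ k := by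
      have h := one_add_mul_le_pow (by linarith : (-2:ℝ) ≤ q - 1) k
      rw [show (1:ℝ) + (q - 1) = q by ring] at h
      exact h
    have hl2 : (0:ℝ) < Real.log 2 := Real.log_pos (by norm_num)
    have e8 : Real.log 2 * ((k:ℝ) * (q - 1)) ≤ Real.log 2 * q ^ k := by nlinarith
    have e9 : cSeq ν q c0 k * R ^ aSeq q k ≤ w R := hiter k R hR0
    calc Real.log 2 * ((k:ℝ) * (q - 1)) ≤ Real.log 2 * q ^ k := e8
      _ ≤ (2:ℝ) ^ (q ^ k) := e6
      _ ≤ (γ * R ^ (2:ℝ)) ^ (q ^ k) := e5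
      _ = γ ^ (q ^ k) * R ^ (2 * q ^ k) := e4
      _ ≤ cSeq ν q c0 k * R ^ aSeq q k := e3
      _ ≤ w R := e9
  -- contradiction
  obtain ⟨k, hk⟩ := exists_nat_gt (w R / (Real.log 2 * (q - 1)))
  have hl2 : (0:ℝ) < Real.log 2 * (q - 1) :=
    mul_pos (Real.log_pos (by norm_num)) (by linarith)
  have : w R < (k : ℝ) * (Real.log 2 * (q - 1)) := by
    rw [div_lt_iff₀ hl2] at hk; exact hk
  have h2 := hkey k
  nlinarith

end NoRad
end NoRadAux


/-- There is no pair of continuous functions `u, w : [0,∞) → ℝ` with `w ≥ 0`, `u(0) < 0`,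
satisfying the iterated radial integral inequalities
`u(r) ≤ u(0) − ∫₀^r s^{1−n} ∫₀^s t^{n−1} w(t)^q dt ds` and
`w(r) ≥ w(0) − ∫₀^r s^{1−n} ∫₀^s t^{n−1} u(t) dt ds` for all `r ≥ 0`,
where `q = (n+4)/(n-4)` and `n ≥ 5`. -/
theorem no_radial_supersolution_with_negative_initial_laplacian
    (n : ℕ) (hn : 5 ≤ n) (q : ℝ) (hq : q = ((n : ℝ) + 4) / ((n : ℝ) - 4)) :
    ¬ ∃ u w : ℝ → ℝ,
      ContinuousOn u (Set.Ici 0) ∧ ContinuousOn w (Set.Ici 0) ∧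
      (∀ r : ℝ, 0 ≤ r → 0 ≤ w r) ∧ u 0 < 0 ∧
      (∀ r : ℝ, 0 ≤ r →
        u r ≤ u 0 - ∫ s in (0:ℝ)..r, s ^ (1 - (n : ℝ)) *
          ∫ t in (0:ℝ)..s, t ^ ((n : ℝ) - 1) * w t ^ q) ∧
      (∀ r : ℝ, 0 ≤ r →
        w r ≥ w 0 - ∫ s in (0:ℝ)..r, s ^ (1 - (n : ℝ)) *
          ∫ t in (0:ℝ)..s, t ^ ((n : ℝ) - 1) * u t) :=
  NoRad.main n hn q hq
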